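/- Let n ≥ 2 and let Bⁿ be the open unit ball in ℝⁿ. For all x,y ∈ Bⁿ one has v_{Bⁿ}(x,y) ≤ ρ_{Bⁿ}(x,y), and the inequality is sharp: for every ε > 0 there exist distinct x,y ∈ Bⁿ with v_{Bⁿ}(x,y) > (1−ε)·ρ_{Bⁿ}(x,y). -/

import Mathlib

open EuclideanGeometry Real Set

open scoped RealInnerProductSpace

/-- The visual angle metric on a domain `G ⊊ ℝⁿ`:
`v_G(x,y) = sup_{z ∈ ∂G} ∠(x,z,y)`. -/
noncomputable def visualAngle {n : ℕ} (G : Set (EuclideanSpace ℝ (Fin n)))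
    (x y : EuclideanSpace ℝ (Fin n)) : ℝ :=
  sSup ((fun z => ∠ x z y) '' frontier G)

/-- The hyperbolic metric of the unit ball:
`ρ_{Bⁿ}(x,y) = 2 arsinh(|x−y|/√((1−|x|²)(1−|y|²)))`. -/
noncomputable def rhoBall {n : ℕ} (x y : EuclideanSpace ℝ (Fin n)) : ℝ :=
  2 * Real.arsinh (dist x y / Real.sqrt ((1 - ‖x‖ ^ 2) * (1 - ‖y‖ ^ 2)))

private lemma vam_eq_of_sq_eq {a b : ℝ} (ha : 0 ≤ a) (hb : 0 ≤ b) (h : a ^ 2 = b ^ 2) :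
    a = b := by
  calc a = Real.sqrt (a ^ 2) := (Real.sqrt_sq ha).symm
    _ = Real.sqrt (b ^ 2) := by rw [h]
    _ = b := Real.sqrt_sq hb

private lemma vam_arsinh_le_self {t : ℝ} (ht : 0 ≤ t) : Real.arsinh t ≤ t := by
  have h : Real.arsinh t ≤ Real.arsinh (Real.sinh t) :=
    Real.arsinh_le_arsinh.mpr (Real.self_le_sinh_iff.mpr ht)
  rwa [Real.arsinh_sinh] at h

private lemma vam_A {s : ℝ} (h0 : 0 ≤ s) (h1 : s ≤ π) :
    Real.cos s * Real.sinh s ≤ Real.sin s * Real.cosh s := by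
  have hd : ∀ t : ℝ, HasDerivAt (fun t => Real.sin t * Real.cosh t - Real.cos t * Real.sinh t)
      (2 * (Real.sin t * Real.sinh t)) t := by
    intro t
    have h := ((Real.hasDerivAt_sin t).fun_mul (Real.hasDerivAt_cosh t)).fun_sub
      ((Real.hasDerivAt_cos t).fun_mul (Real.hasDerivAt_sinh t))
    refine h.congr_deriv ?_
    ring
  have mono : MonotoneOn (fun t => Real.sin t * Real.cosh t - Real.cos t * Real.sinh t)
      (Icc 0 π) := by
    apply monotoneOn_of_deriv_nonneg (convex_Icc _ _)
    · exact ((Real.continuous_sin.mul Real.continuous_cosh).sub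
        (Real.continuous_cos.mul Real.continuous_sinh)).continuousOn
    · intro t _
      exact (hd t).differentiableAt.differentiableWithinAt
    · intro t ht
      rw [interior_Icc] at ht
      rw [(hd t).deriv]
      have h1 : 0 ≤ Real.sin t := Real.sin_nonneg_of_nonneg_of_le_pi ht.1.le ht.2.le
      have h2 : 0 ≤ Real.sinh t := Real.sinh_nonneg_iff.mpr ht.1.le
      positivity
  have := mono (left_mem_Icc.mpr Real.pi_pos.le) ⟨h0, h1⟩ h0
  simp only [Real.sin_zero, Real.cos_zero, Real.sinh_zero, Real.cosh_zero] at this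
  linarith

private lemma vam_B {s : ℝ} (h0 : 0 ≤ s) (h1 : s ≤ π / 2) :
    Real.cos s ^ 2 * Real.cosh s ≤ 1 := by
  have hd : ∀ t : ℝ, HasDerivAt (fun t => Real.cos t ^ 2 * Real.cosh t)
      (Real.cos t * (Real.cos t * Real.sinh t - 2 * Real.sin t * Real.cosh t)) t := by
    intro t
    have h := (((Real.hasDerivAt_cos t).fun_pow 2)).fun_mul (Real.hasDerivAt_cosh t)
    refine h.congr_deriv ?_
    push_cast
    ring
  have anti : AntitoneOn (fun t => Real.cos t ^ 2 * Real.cosh t) (Icc 0 (π / 2)) := by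
    apply antitoneOn_of_deriv_nonpos (convex_Icc _ _)
    · exact ((Real.continuous_cos.pow 2).mul Real.continuous_cosh).continuousOn
    · intro t _
      exact (hd t).differentiableAt.differentiableWithinAt
    · intro t ht
      rw [interior_Icc] at ht
      obtain ⟨ht1, ht2⟩ := ht
      rw [(hd t).deriv]
      have hc : 0 < Real.cos t := Real.cos_pos_of_mem_Ioo
        ⟨by linarith [Real.pi_pos], ht2⟩
      have hs : 0 ≤ Real.sin t := Real.sin_nonneg_of_nonneg_of_le_pi ht1.le
        (by linarith [Real.pi_pos])
      have hA := vam_A ht1.le (by linarith [Real.pi_pos])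
      have hch : 0 < Real.cosh t := Real.cosh_pos t
      have hinner : Real.cos t * Real.sinh t - 2 * Real.sin t * Real.cosh t ≤ 0 := by
        nlinarith
      exact mul_nonpos_of_nonneg_of_nonpos hc.le hinner
  have := anti (left_mem_Icc.mpr (by positivity)) ⟨h0, h1⟩ h0
  simp only [Real.cos_zero, Real.cosh_zero, one_pow, mul_one] at this
  linarith

private lemma vam_C {s : ℝ} (h0 : 0 ≤ s) (h1 : s < π / 2) :
    Real.sinh s ≤ Real.tan s := by
  have hcos : ∀ t ∈ Icc 0 s, 0 < Real.cos t := by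
    intro t ht
    exact Real.cos_pos_of_mem_Ioo ⟨by linarith [Real.pi_pos, ht.1], lt_of_le_of_lt ht.2 h1⟩
  have hd : ∀ t ∈ Icc 0 s, HasDerivAt (fun t => Real.tan t - Real.sinh t)
      (1 / Real.cos t ^ 2 - Real.cosh t) t := by
    intro t ht
    exact (Real.hasDerivAt_tan (hcos t ht).ne').sub (Real.hasDerivAt_sinh t)
  have mono : MonotoneOn (fun t => Real.tan t - Real.sinh t) (Icc 0 s) := by
    apply monotoneOn_of_deriv_nonneg (convex_Icc _ _)
    · intro t ht
      exact (hd t ht).continuousAt.continuousWithinAt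
    · intro t ht
      rw [interior_Icc] at ht
      exact (hd t (Ioo_subset_Icc_self ht)).differentiableAt.differentiableWithinAt
    · intro t ht
      rw [interior_Icc] at ht
      rw [(hd t (Ioo_subset_Icc_self ht)).deriv]
      have hc := hcos t (Ioo_subset_Icc_self ht)
      have hB := vam_B ht.1.le (le_of_lt (lt_of_lt_of_le ht.2 (le_of_lt h1)))
      have : Real.cosh t ≤ 1 / Real.cos t ^ 2 := by
        rw [le_div_iff₀ (by positivity)]
        linarith
      linarith
  have := mono (left_mem_Icc.mpr h0) ⟨h0, le_rfl⟩ h0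
  simp only [Real.tan_zero, Real.sinh_zero, sub_zero, sub_self] at this
  linarith

private lemma vam_D {s : ℝ} (h0 : 0 ≤ s) (h1 : s ≤ π / 2) :
    Real.sinh s * Real.cos s ≤ Real.sin s := by
  rcases lt_or_eq_of_le h1 with h | h
  · have hC := vam_C h0 h
    have hc : 0 < Real.cos s := Real.cos_pos_of_mem_Ioo ⟨by linarith [Real.pi_pos], h⟩
    rw [Real.tan_eq_sin_div_cos, le_div_iff₀ hc] at hC
    linarith
  · rw [h]
    norm_num [Real.cos_pi_div_two, Real.sin_pi_div_two]

private lemma vam_E {θ : ℝ} (h0 : 0 ≤ θ) (h1 : θ ≤ π) :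
    Real.sinh (θ / 2) ^ 2 * (1 + Real.cos θ) ≤ 1 - Real.cos θ := by
  have hs0 : 0 ≤ θ / 2 := by linarith
  have hs1 : θ / 2 ≤ π / 2 := by linarith
  have hc := Real.cos_two_mul (θ / 2)
  rw [show 2 * (θ / 2) = θ from by ring] at hc
  have hD := vam_D hs0 hs1
  have hsh : 0 ≤ Real.sinh (θ / 2) := Real.sinh_nonneg_iff.mpr hs0
  have hcc : 0 ≤ Real.cos (θ / 2) := Real.cos_nonneg_of_mem_Icc
    ⟨by linarith [Real.pi_pos], hs1⟩
  have hkey : (Real.sinh (θ / 2) * Real.cos (θ / 2)) ^ 2 ≤ Real.sin (θ / 2) ^ 2 := by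
    have h2 : 0 ≤ Real.sinh (θ / 2) * Real.cos (θ / 2) := mul_nonneg hsh hcc
    nlinarith
  have hpyth := Real.sin_sq_add_cos_sq (θ / 2)
  nlinarith [hkey, hpyth]

private lemma vam_angle_eq {n : ℕ} (x z y : EuclideanSpace ℝ (Fin n)) :
    ∠ x z y = InnerProductGeometry.angle (x - z) (y - z) := by
  rw [EuclideanGeometry.angle, vsub_eq_sub, vsub_eq_sub]

private lemma vam_main {n : ℕ} (x y z : EuclideanSpace ℝ (Fin n))
    (hx : ‖x‖ < 1) (hy : ‖y‖ < 1) (hz : ‖z‖ = 1) :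
    ∠ x z y ≤ rhoBall x y := by
  have hxz : x ≠ z := fun h => by rw [h, hz] at hx; exact lt_irrefl 1 hx
  have hyz : y ≠ z := fun h => by rw [h, hz] at hy; exact lt_irrefl 1 hy
  rw [vam_angle_eq]
  have hθ0 : 0 ≤ InnerProductGeometry.angle (x - z) (y - z) :=
    InnerProductGeometry.angle_nonneg _ _
  have hθπ : InnerProductGeometry.angle (x - z) (y - z) ≤ π :=
    InnerProductGeometry.angle_le_pi _ _
  have hd : 0 < ‖x - z‖ := norm_pos_iff.mpr (sub_ne_zero.mpr hxz)
  have he : 0 < ‖y - z‖ := norm_pos_iff.mpr (sub_ne_zero.mpr hyz)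
  have hcw := InnerProductGeometry.cos_angle_mul_norm_mul_norm (x - z) (y - z)
  have hA : 1 - ‖x‖ ^ 2 = -(2 * (inner ℝ z (x - z) : ℝ)) - ‖x - z‖ ^ 2 := by
    conv_lhs => rw [show x = (x - z) + z from (sub_add_cancel x z).symm]
    rw [norm_add_sq_real, hz, real_inner_comm]
    ring
  have hB : 1 - ‖y‖ ^ 2 = -(2 * (inner ℝ z (y - z) : ℝ)) - ‖y - z‖ ^ 2 := by
    conv_lhs => rw [show y = (y - z) + z from (sub_add_cancel y z).symm]
    rw [norm_add_sq_real, hz, real_inner_comm]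
    ring
  have hxy : ‖x - y‖ ^ 2 = ‖x - z‖ ^ 2 - 2 * (inner ℝ (x - z) (y - z) : ℝ) + ‖y - z‖ ^ 2 := by
    rw [show x - y = (x - z) - (y - z) by abel, norm_sub_sq_real]
  have hCS : 2 * (inner ℝ z (x - z) : ℝ) * (inner ℝ z (y - z) : ℝ)
      - (inner ℝ (x - z) (y - z) : ℝ) ≤ ‖x - z‖ * ‖y - z‖ := by
    have h1 : (inner ℝ ((2 * (inner ℝ z (x - z) : ℝ)) • z - (x - z)) (y - z) : ℝ) =
        2 * (inner ℝ z (x - z) : ℝ) * (inner ℝ z (y - z) : ℝ)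
          - (inner ℝ (x - z) (y - z) : ℝ) := by
      rw [inner_sub_left, real_inner_smul_left]
    have h2 : ‖(2 * (inner ℝ z (x - z) : ℝ)) • z - (x - z)‖ ^ 2 = ‖x - z‖ ^ 2 := by
      rw [norm_sub_sq_real, real_inner_smul_left, norm_smul, Real.norm_eq_abs, hz,
        mul_one, sq_abs]
      ring
    have h3 : ‖(2 * (inner ℝ z (x - z) : ℝ)) • z - (x - z)‖ = ‖x - z‖ :=
      vam_eq_of_sq_eq (norm_nonneg _) hd.le h2
    calc 2 * (inner ℝ z (x - z) : ℝ) * (inner ℝ z (y - z) : ℝ)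
          - (inner ℝ (x - z) (y - z) : ℝ)
        = (inner ℝ ((2 * (inner ℝ z (x - z) : ℝ)) • z - (x - z)) (y - z) : ℝ) := h1.symm
      _ ≤ ‖(2 * (inner ℝ z (x - z) : ℝ)) • z - (x - z)‖ * ‖y - z‖ := real_inner_le_norm _ _
      _ = ‖x - z‖ * ‖y - z‖ := by rw [h3]
  have hdxy : dist x y = ‖x - y‖ := dist_eq_norm x y
  -- now make everything opaque
  obtain ⟨θ, hθ⟩ : ∃ t, InnerProductGeometry.angle (x - z) (y - z) = t := ⟨_, rfl⟩
  obtain ⟨d, hdef⟩ : ∃ t, ‖x - z‖ = t := ⟨_, rfl⟩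
  obtain ⟨e, heef⟩ : ∃ t, ‖y - z‖ = t := ⟨_, rfl⟩
  obtain ⟨p, hp⟩ : ∃ t, (inner ℝ z (x - z) : ℝ) = t := ⟨_, rfl⟩
  obtain ⟨q, hq⟩ : ∃ t, (inner ℝ z (y - z) : ℝ) = t := ⟨_, rfl⟩
  obtain ⟨w, hw⟩ : ∃ t, (inner ℝ (x - z) (y - z) : ℝ) = t := ⟨_, rfl⟩
  obtain ⟨m, hm⟩ : ∃ t, ‖x - y‖ = t := ⟨_, rfl⟩
  obtain ⟨a, ha⟩ : ∃ t, ‖x‖ = t := ⟨_, rfl⟩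
  obtain ⟨b, hb⟩ : ∃ t, ‖y‖ = t := ⟨_, rfl⟩
  rw [hθ] at hθ0 hθπ
  rw [hθ, hdef, heef, hw] at hcw
  rw [hdef] at hd
  rw [heef] at he
  rw [hp, hdef, ha] at hA
  rw [hq, heef, hb] at hB
  rw [hm, hdef, heef, hw] at hxy
  rw [hp, hq, hw, hdef, heef] at hCS
  rw [ha] at hx
  rw [hb] at hy
  rw [hθ]
  rw [rhoBall, hdxy, hm, ha, hb]
  have ha0 : 0 ≤ a := ha ▸ norm_nonneg x
  have hb0 : 0 ≤ b := hb ▸ norm_nonneg y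
  have hm0 : 0 ≤ m := hm ▸ norm_nonneg _
  clear hθ hdef heef hp hq hw hm ha hb hdxy hxz hyz hz
  clear x y z
  have hApos : 0 < 1 - a ^ 2 := by nlinarith
  have hBpos : 0 < 1 - b ^ 2 := by nlinarith
  have hAB : (1 - a ^ 2) * (1 - b ^ 2) ≤ 2 * (d * e) * (1 + Real.cos θ) := by
    have h1 : 1 - a ^ 2 ≤ -(2 * p) := by nlinarith [sq_nonneg d]
    have h2 : 1 - b ^ 2 ≤ -(2 * q) := by nlinarith [sq_nonneg e]
    have h3 : (1 - a ^ 2) * (1 - b ^ 2) ≤ (-(2 * p)) * (-(2 * q)) :=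
      mul_le_mul h1 h2 hBpos.le (by linarith)
    nlinarith [hCS, hcw]
  have hE := vam_E hθ0 hθπ
  have key : Real.sinh (θ / 2) ^ 2 * ((1 - a ^ 2) * (1 - b ^ 2)) ≤ m ^ 2 := by
    have t1 : Real.sinh (θ / 2) ^ 2 * ((1 - a ^ 2) * (1 - b ^ 2)) ≤
        Real.sinh (θ / 2) ^ 2 * (2 * (d * e) * (1 + Real.cos θ)) :=
      mul_le_mul_of_nonneg_left hAB (sq_nonneg _)
    have t2 : (2 * (d * e)) * (Real.sinh (θ / 2) ^ 2 * (1 + Real.cos θ)) ≤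
        (2 * (d * e)) * (1 - Real.cos θ) :=
      mul_le_mul_of_nonneg_left hE (by positivity)
    nlinarith [t1, t2, sq_nonneg (d - e)]
  have hABpos : 0 < (1 - a ^ 2) * (1 - b ^ 2) := mul_pos hApos hBpos
  have hsqpos : 0 < Real.sqrt ((1 - a ^ 2) * (1 - b ^ 2)) := Real.sqrt_pos.mpr hABpos
  have hsh : 0 ≤ Real.sinh (θ / 2) := Real.sinh_nonneg_iff.mpr (by linarith)
  have h5 : Real.sinh (θ / 2) ≤ m / Real.sqrt ((1 - a ^ 2) * (1 - b ^ 2)) := by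
    rw [le_div_iff₀ hsqpos]
    have h6 : (Real.sinh (θ / 2) * Real.sqrt ((1 - a ^ 2) * (1 - b ^ 2))) ^ 2 ≤ m ^ 2 := by
      rw [mul_pow, Real.sq_sqrt hABpos.le]
      exact key
    have h7 := Real.sqrt_le_sqrt h6
    rwa [Real.sqrt_sq (by positivity), Real.sqrt_sq hm0] at h7
  have h8 : θ / 2 ≤ Real.arsinh (m / Real.sqrt ((1 - a ^ 2) * (1 - b ^ 2))) := by
    rw [← Real.arsinh_sinh (θ / 2)]
    exact Real.arsinh_le_arsinh.mpr h5
  linarith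

private lemma vam_rho_nonneg {n : ℕ} (x y : EuclideanSpace ℝ (Fin n)) :
    0 ≤ rhoBall x y := by
  rw [rhoBall]
  have h0 : 0 ≤ Real.arsinh (dist x y / Real.sqrt ((1 - ‖x‖ ^ 2) * (1 - ‖y‖ ^ 2))) :=
    Real.arsinh_nonneg_iff.mpr (by positivity)
  linarith

private lemma vam_theta_sq {u θ : ℝ} (hu0 : 0 < u)
    (hθc : Real.cos θ * (u ^ 2 + u ^ 4) = u ^ 2 - u ^ 4) :
    4 * u ^ 4 ≤ θ ^ 2 * (u ^ 2 + u ^ 4) := by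
  have hcos := Real.one_sub_sq_div_two_le_cos (x := θ)
  nlinarith [mul_le_mul_of_nonneg_right hcos (show (0 : ℝ) ≤ u ^ 2 + u ^ 4 by positivity)]

private lemma vam_sharp_num {ε u θ R : ℝ} (hε4 : ε = 4 * u) (hu0 : 0 < u) (hu8 : u ≤ 1 / 8)
    (hθ0 : 0 ≤ θ) (hθsq : 4 * u ^ 4 ≤ θ ^ 2 * (u ^ 2 + u ^ 4)) (hR0 : 0 ≤ R)
    (hRle : R ≤ 2 * (2 * u ^ 2 / (2 * u - u ^ 2 - u ^ 4))) :
    (1 - ε) * R < θ := by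
  subst hε4
  have h1u : 0 < 1 - u := by linarith
  have hq2 : u ^ 2 ≤ u / 8 := by nlinarith
  have hq4 : u ^ 4 ≤ u ^ 2 := by nlinarith [sq_nonneg u, sq_nonneg (u ^ 2)]
  have hApos : 0 < 2 * u - u ^ 2 - u ^ 4 := by linarith
  have hε1 : 0 < 1 - 4 * u := by linarith
  have hR2 : R ≤ 2 * u / (1 - u) := by
    have he : 2 * (2 * u ^ 2 / (2 * u - u ^ 2 - u ^ 4)) =
        4 * u ^ 2 / (2 * u - u ^ 2 - u ^ 4) := by ring
    rw [he] at hRle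
    have h2 : 4 * u ^ 2 / (2 * u - u ^ 2 - u ^ 4) ≤ 2 * u / (1 - u) := by
      rw [div_le_div_iff₀ hApos h1u]
      nlinarith [mul_nonneg (mul_nonneg (pow_nonneg hu0.le 3)
        (show (0 : ℝ) ≤ 1 - u by linarith)) (show (0 : ℝ) ≤ 1 + u by linarith)]
    linarith
  have hkey : ((1 - 4 * u) * (2 * u)) ^ 2 * (u ^ 2 + u ^ 4) <
      4 * u ^ 4 * ((1 - u) ^ 2) := by
    have hg : 0 < 6 - 16 * u + 8 * u ^ 2 - 16 * u ^ 3 := by nlinarith [sq_nonneg u]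
    nlinarith [mul_pos (pow_pos hu0 5) hg]
  have hc2 : ((1 - 4 * u) * (2 * u / (1 - u))) ^ 2 < 4 * u ^ 4 / (u ^ 2 + u ^ 4) := by
    rw [show (1 - 4 * u) * (2 * u / (1 - u)) = (1 - 4 * u) * (2 * u) / (1 - u) from by ring,
      div_pow, div_lt_div_iff₀ (by positivity) (by positivity)]
    nlinarith [hkey]
  have hc2' : 4 * u ^ 4 / (u ^ 2 + u ^ 4) ≤ θ ^ 2 := by
    rw [div_le_iff₀ (by positivity)]
    linarith
  have hlt : (1 - 4 * u) * (2 * u / (1 - u)) < θ :=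
    lt_of_pow_lt_pow_left₀ 2 hθ0 (lt_of_lt_of_le hc2 hc2')
  have hle : (1 - 4 * u) * R ≤ (1 - 4 * u) * (2 * u / (1 - u)) :=
    mul_le_mul_of_nonneg_left hR2 hε1.le
  linarith

private lemma vam_lt_one {t : ℝ} (h0 : 0 ≤ t) (h2 : t ^ 2 < 1) : t < 1 := by
  nlinarith [sq_nonneg (t - 1)]

private lemma vam_sharp {n : ℕ} (hn : 2 ≤ n) {ε : ℝ} (hε0 : 0 < ε) (hεle : ε ≤ 1 / 2) :
    ∃ x ∈ Metric.ball (0 : EuclideanSpace ℝ (Fin n)) 1,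
      ∃ y ∈ Metric.ball (0 : EuclideanSpace ℝ (Fin n)) 1,
        x ≠ y ∧ (1 - ε) * rhoBall x y < visualAngle (Metric.ball 0 1) x y := by
  obtain ⟨u, hu⟩ : ∃ t, ε / 4 = t := ⟨_, rfl⟩
  have hε4 : ε = 4 * u := by linarith
  have hu0 : 0 < u := by linarith
  have hu8 : u ≤ 1 / 8 := by linarith
  have hq2 : u ^ 2 ≤ u / 8 := by nlinarith
  have hq4 : u ^ 4 ≤ u ^ 2 := by nlinarith [sq_nonneg u, sq_nonneg (u ^ 2)]
  have harith1 : (1 - u) * (1 - u) + u ^ 2 * u ^ 2 < 1 := by nlinarith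
  have harith2 : (1 - u) * (1 - u) + -(u ^ 2) * -(u ^ 2) < 1 := by nlinarith
  have hApos : 0 < 2 * u - u ^ 2 - u ^ 4 := by linarith
  have h0n : 0 < n := by omega
  have h1n : 1 < n := by omega
  set i0 : Fin n := ⟨0, h0n⟩ with hi0
  set i1 : Fin n := ⟨1, h1n⟩ with hi1
  have hne : i0 ≠ i1 := by simp [hi0, hi1, Fin.ext_iff]
  have hps : ∀ a b c d : ℝ,
      (inner ℝ (EuclideanSpace.single i0 a + EuclideanSpace.single i1 b)
        (EuclideanSpace.single i0 c + EuclideanSpace.single i1 d) : ℝ) = a * c + b * d := by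
    intro a b c d
    rw [inner_add_left, inner_add_right, inner_add_right]
    simp [EuclideanSpace.inner_single_left, EuclideanSpace.single_apply, hne, hne.symm]
  set X := EuclideanSpace.single i0 (1 - u) + EuclideanSpace.single i1 (u ^ 2) with hXdef
  set Y := EuclideanSpace.single i0 (1 - u) + EuclideanSpace.single i1 (-(u ^ 2)) with hYdef
  set Z := EuclideanSpace.single i0 (1 : ℝ) + EuclideanSpace.single i1 (0 : ℝ) with hZdef
  have hXX : ‖X‖ ^ 2 = (1 - u) * (1 - u) + u ^ 2 * u ^ 2 := by
    rw [← real_inner_self_eq_norm_sq, hXdef]; exact hps _ _ _ _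
  have hYY : ‖Y‖ ^ 2 = (1 - u) * (1 - u) + -(u ^ 2) * -(u ^ 2) := by
    rw [← real_inner_self_eq_norm_sq, hYdef]; exact hps _ _ _ _
  have hZZn : ‖Z‖ ^ 2 = 1 * 1 + 0 * 0 := by
    rw [← real_inner_self_eq_norm_sq, hZdef]; exact hps _ _ _ _
  have hZnorm : ‖Z‖ = 1 :=
    vam_eq_of_sq_eq (norm_nonneg _) one_pos.le (by rw [hZZn]; norm_num)
  have hXYi : (inner ℝ X Y : ℝ) = (1 - u) * (1 - u) + u ^ 2 * -(u ^ 2) := by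
    rw [hXdef, hYdef]; exact hps _ _ _ _
  have hXZi : (inner ℝ X Z : ℝ) = (1 - u) * 1 + u ^ 2 * 0 := by
    rw [hXdef, hZdef]; exact hps _ _ _ _
  have hYZi : (inner ℝ Y Z : ℝ) = (1 - u) * 1 + -(u ^ 2) * 0 := by
    rw [hYdef, hZdef]; exact hps _ _ _ _
  have hZZi : (inner ℝ Z Z : ℝ) = 1 * 1 + 0 * 0 := by
    rw [hZdef]; exact hps _ _ _ _
  have hZYi : (inner ℝ Z Y : ℝ) = 1 * (1 - u) + 0 * -(u ^ 2) := by
    rw [hZdef, hYdef]; exact hps _ _ _ _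
  have hZXi : (inner ℝ Z X : ℝ) = 1 * (1 - u) + 0 * (u ^ 2) := by
    rw [hZdef, hXdef]; exact hps _ _ _ _
  have hXXi : (inner ℝ X X : ℝ) = (1 - u) * (1 - u) + u ^ 2 * u ^ 2 := by
    rw [hXdef]; exact hps _ _ _ _
  have hYYi : (inner ℝ Y Y : ℝ) = (1 - u) * (1 - u) + -(u ^ 2) * -(u ^ 2) := by
    rw [hYdef]; exact hps _ _ _ _
  clear_value X Y Z
  clear hXdef hYdef hZdef hps hne
  have hUV : (inner ℝ (X - Z) (Y - Z) : ℝ) = u ^ 2 - u ^ 4 := by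
    rw [inner_sub_left, inner_sub_right, inner_sub_right, hXYi, hXZi, hZYi, hZZi]
    ring
  have hUU : (inner ℝ (X - Z) (X - Z) : ℝ) = u ^ 2 + u ^ 4 := by
    rw [inner_sub_left, inner_sub_right, inner_sub_right, hXXi, hXZi, hZXi, hZZi]
    ring
  have hVV : (inner ℝ (Y - Z) (Y - Z) : ℝ) = u ^ 2 + u ^ 4 := by
    rw [inner_sub_left, inner_sub_right, inner_sub_right, hYYi, hYZi, hZYi, hZZi]
    ring
  have hU2 : ‖X - Z‖ ^ 2 = u ^ 2 + u ^ 4 := by rw [← real_inner_self_eq_norm_sq]; exact hUU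
  have hV2 : ‖Y - Z‖ ^ 2 = u ^ 2 + u ^ 4 := by rw [← real_inner_self_eq_norm_sq]; exact hVV
  have hN : ‖X - Z‖ * ‖Y - Z‖ = u ^ 2 + u ^ 4 := by
    refine vam_eq_of_sq_eq (by positivity) (by positivity) ?_
    rw [mul_pow, hU2, hV2]
    ring
  have hXmY2 : ‖X - Y‖ ^ 2 = 4 * u ^ 4 := by
    rw [norm_sub_sq_real, hXX, hXYi, hYY]
    ring
  have hXmY : ‖X - Y‖ = 2 * u ^ 2 := by
    refine vam_eq_of_sq_eq (norm_nonneg _) (by positivity) ?_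
    rw [hXmY2]
    ring
  have hX2 : ‖X‖ ^ 2 < 1 := by rw [hXX]; linarith [harith1]
  have hY2 : ‖Y‖ ^ 2 < 1 := by rw [hYY]; linarith [harith2]
  have hXlt : ‖X‖ < 1 := vam_lt_one (norm_nonneg X) hX2
  have hYlt : ‖Y‖ < 1 := vam_lt_one (norm_nonneg Y) hY2
  have hcw := InnerProductGeometry.cos_angle_mul_norm_mul_norm (X - Z) (Y - Z)
  rw [hN, hUV] at hcw
  have hangle : ∠ X Z Y = InnerProductGeometry.angle (X - Z) (Y - Z) := vam_angle_eq X Z Y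
  have hθ0 : 0 ≤ InnerProductGeometry.angle (X - Z) (Y - Z) :=
    InnerProductGeometry.angle_nonneg _ _
  have hθsq := vam_theta_sq hu0 hcw
  have hzfr : Z ∈ frontier (Metric.ball (0 : EuclideanSpace ℝ (Fin n)) 1) := by
    rw [frontier_ball (0 : EuclideanSpace ℝ (Fin n)) one_ne_zero, mem_sphere_zero_iff_norm]
    exact hZnorm
  have hbdd : BddAbove ((fun z => ∠ X z Y) '' frontier (Metric.ball
      (0 : EuclideanSpace ℝ (Fin n)) 1)) := by
    refine ⟨π, ?_⟩
    rintro r ⟨w, -, rfl⟩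
    exact EuclideanGeometry.angle_le_pi _ _ _
  have hvle : ∠ X Z Y ≤ visualAngle (Metric.ball 0 1) X Y := by
    rw [visualAngle]
    exact le_csSup hbdd ⟨Z, hzfr, rfl⟩
  have hdist : dist X Y = 2 * u ^ 2 := by rw [dist_eq_norm, hXmY]
  have hA' : 1 - ‖X‖ ^ 2 = 2 * u - u ^ 2 - u ^ 4 := by rw [hXX]; ring
  have hB' : 1 - ‖Y‖ ^ 2 = 2 * u - u ^ 2 - u ^ 4 := by rw [hYY]; ring
  have hApos : 0 < 2 * u - u ^ 2 - u ^ 4 := by linarith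
  have hρeq : rhoBall X Y = 2 * Real.arsinh (2 * u ^ 2 / (2 * u - u ^ 2 - u ^ 4)) := by
    rw [rhoBall, hdist, hA', hB', Real.sqrt_mul_self hApos.le]
  have hρle : rhoBall X Y ≤ 2 * (2 * u ^ 2 / (2 * u - u ^ 2 - u ^ 4)) := by
    rw [hρeq]
    have harg := vam_arsinh_le_self (t := 2 * u ^ 2 / (2 * u - u ^ 2 - u ^ 4)) (by positivity)
    linarith
  have hρ0 : 0 ≤ rhoBall X Y := vam_rho_nonneg X Y
  refine ⟨X, ?_, Y, ?_, ?_, ?_⟩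
  · rw [mem_ball_zero_iff]; exact hXlt
  · rw [mem_ball_zero_iff]; exact hYlt
  · intro h
    rw [h, sub_self, norm_zero] at hXmY
    have h2pos : 0 < 2 * u ^ 2 := by positivity
    linarith
  · obtain ⟨θ, hθ⟩ : ∃ t, InnerProductGeometry.angle (X - Z) (Y - Z) = t := ⟨_, rfl⟩
    rw [hθ] at hθ0 hθsq
    rw [hangle, hθ] at hvle
    have hnum := vam_sharp_num hε4 hu0 hu8 hθ0 hθsq hρ0 hρle
    linarith

theorem stmt5 (n : ℕ) (hn : 2 ≤ n) :
    (∀ x ∈ Metric.ball (0 : EuclideanSpace ℝ (Fin n)) 1,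
      ∀ y ∈ Metric.ball (0 : EuclideanSpace ℝ (Fin n)) 1,
        visualAngle (Metric.ball 0 1) x y ≤ rhoBall x y) ∧
    (∀ ε : ℝ, 0 < ε →
      ∃ x ∈ Metric.ball (0 : EuclideanSpace ℝ (Fin n)) 1,
        ∃ y ∈ Metric.ball (0 : EuclideanSpace ℝ (Fin n)) 1,
          x ≠ y ∧ (1 - ε) * rhoBall x y < visualAngle (Metric.ball 0 1) x y) := by
  constructor
  · intro x hx y hy
    rw [mem_ball_zero_iff] at hx hy
    rw [visualAngle]
    apply Real.sSup_le
    · rintro r ⟨z, hzf, rfl⟩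
      rw [frontier_ball (0 : EuclideanSpace ℝ (Fin n)) one_ne_zero,
        mem_sphere_zero_iff_norm] at hzf
      exact vam_main x y z hx hy hzf
    · exact vam_rho_nonneg x y
  · intro ε hε
    obtain ⟨x, hx, y, hy, hxy, hlt⟩ :=
      vam_sharp hn (lt_min hε (by norm_num)) (min_le_right ε (1 / 2))
    refine ⟨x, hx, y, hy, hxy, ?_⟩
    have h1 : (1 - ε) * rhoBall x y ≤ (1 - min ε (1 / 2)) * rhoBall x y :=
      mul_le_mul_of_nonneg_right (by linarith [min_le_left ε (1 / 2)]) (vam_rho_nonneg x y)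
    linarith
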